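/- The number of rational points of \(\mathcal{L}_2\) over \(\mathbb{F}_5\) is not congruent to 1 modulo 5; in fact \(|\mathcal{L}_2(\mathbb{F}_5)| = 64 \equiv 4 \pmod{5}\), so the conjectural congruence \(|X(\mathbb{F}_q)| \equiv 1 \pmod{q}\) fails for this weighted hypersurface of degree 30. -/
import Mathlib


/-- The reduction of `F₂` modulo 5, as a function of the four Igusa coordinates. -/
def F2mod5 (x y z w : ZMod 5) : ZMod 5 :=
  -x^7*y^4 + 2*x^5*y^5 + 2*x^6*y^3*z - x^3*y^6 + 2*x^4*y^4*z + x^5*y^2*z^2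
    + 2*x^6*y^2*w + 2*x^2*y^5*z - 2*x^4*y*z^3 + x^4*y^3*w - 2*x^5*y*z*w - y^6*z
    - 2*x*y^4*z^2 + x^2*y^2*z^3 - x^3*z^4 - 2*x^2*y^4*w - 2*x^3*y^2*z*w
    - 2*x^4*z^2*w - x^5*w^2 - 2*y^3*z^3 - 2*x*y*z^4 + 2*y^5*w - z^5

/-- The number of points of `𝓛₂(𝔽₅)`: `𝔽₅ˣ`-orbits (weights `(2,4,6,10)`) of
nonzero solutions of `F₂ = 0` in `𝔽₅⁴`. -/
noncomputable def L2F5card : ℕ :=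
  Nat.card (Quot (fun a b :
      {v : Fin 4 → ZMod 5 // v ≠ 0 ∧ F2mod5 (v 0) (v 1) (v 2) (v 3) = 0} =>
      ∃ l : (ZMod 5)ˣ, ∀ i, b.1 i = (l : ZMod 5) ^ (![2, 4, 6, 10] i) * a.1 i))

/-- The type of nonzero solutions of `F₂ = 0`. -/
abbrev L2Sol := {v : Fin 4 → ZMod 5 // v ≠ 0 ∧ F2mod5 (v 0) (v 1) (v 2) (v 3) = 0}

/-- The orbit relation on solutions. -/
abbrev L2R : L2Sol → L2Sol → Prop := fun a b =>
  ∃ l : (ZMod 5)ˣ, ∀ i, b.1 i = (l : ZMod 5) ^ (![2, 4, 6, 10] i) * a.1 i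

lemma L2R_equiv : Equivalence L2R := by
  constructor
  · intro a; exact ⟨1, by simp⟩
  · rintro a b ⟨l, h⟩
    refine ⟨l⁻¹, fun i => ?_⟩
    rw [h i, ← mul_assoc, ← Units.val_pow_eq_pow_val, ← Units.val_pow_eq_pow_val,
      ← Units.val_mul, inv_pow, inv_mul_cancel, Units.val_one, one_mul]
  · rintro a b c ⟨l, h⟩ ⟨m, h'⟩
    refine ⟨m * l, fun i => ?_⟩
    rw [h' i, h i, ← mul_assoc, Units.val_mul, mul_pow]

instance : DecidableEq (Quot L2R) := fun x y =>
  Quot.recOnSubsingleton₂ x y fun a b =>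
    decidable_of_iff (L2R a b)
      (by rw [Quot.eq]
          exact ⟨Relation.EqvGen.rel _ _, fun h => L2R_equiv.eqvGen_iff.mp h⟩)

instance : Fintype (Quot L2R) :=
  Fintype.ofSurjective (Quot.mk L2R) fun q => Quot.inductionOn q fun a => ⟨a, rfl⟩

set_option maxRecDepth 100000 in
set_option maxHeartbeats 4000000 in
lemma L2_card_aux : Fintype.card (Quot L2R) = 64 := by decide

/-- `|𝓛₂(𝔽₅)| = 64 ≡ 4 (mod 5)`, so the conjectural congruence
`|X(𝔽_q)| ≡ 1 (mod q)` fails for this weighted hypersurface of degree 30. -/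
theorem L2_F5_congruence_fails :
    L2F5card = 64 ∧ L2F5card % 5 = 4 ∧ ¬ (L2F5card ≡ 1 [MOD 5]) := by
  have h : L2F5card = 64 := by
    have e : L2F5card = Fintype.card (Quot L2R) := by
      unfold L2F5card
      exact Nat.card_eq_fintype_card
    rw [e, L2_card_aux]
  refine ⟨h, by rw [h], by rw [h]; decide⟩
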